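/- Let f : I → I be a Borel map on I = [0,1]. If there exist a sequence of Borel sets A_k and integers n_k → ∞ with λ(A_k) → 0 and λ(f^{-n_k}(A_k)) ≥ 1 − 2^{-k-1}, then the set A = ⋂_k f^{-n_k}(A_k) satisfies λ(A) ≥ 1/2 and liminf_n λ(f^n(A)) = 0. -/

import Mathlib

open MeasureTheory Set Filter

lemma aux_tsum_half :
    (∑' (k : ℕ), if 1 ≤ k then ((2:ENNReal) ^ (k + 1))⁻¹ else 0) = 1/2 := by
  rw [tsum_eq_zero_add' ENNReal.summable]
  have h : ∀ k : ℕ, (if 1 ≤ k + 1 then ((2:ENNReal) ^ (k + 1 + 1))⁻¹ else 0)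
      = (2:ENNReal)⁻¹ ^ k * 4⁻¹ := by
    intro k
    rw [if_pos (Nat.le_add_left 1 k), ENNReal.inv_pow, show k + 1 + 1 = k + 2 from rfl, pow_add]
    congr 1
    rw [← ENNReal.inv_pow]
    norm_num
  rw [tsum_congr h]
  rw [ENNReal.tsum_mul_right, ENNReal.tsum_geometric, ENNReal.one_sub_inv_two, inv_inv]
  simp only [Nat.one_le_iff_ne_zero, ne_eq, not_true_eq_false, if_false, zero_add,
    not_false_eq_true]
  rw [ENNReal.eq_div_iff (by norm_num) (by norm_num), ← mul_assoc,
    show (2:ENNReal) * 2 = 4 by norm_num,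
    ENNReal.mul_inv_cancel (by norm_num) (by norm_num)]

/-- If there are Borel sets `A_k ⊆ [0,1]` and integers `n_k → ∞` with `λ(A_k) → 0` and
`λ(f^{-n_k}(A_k)) ≥ 1 - 2^{-k-1}` (for `k ≥ 1`), then `A = ⋂_{k≥1} f^{-n_k}(A_k)`
satisfies `λ(A) ≥ 1/2` and `liminf_n λ(fⁿ(A)) = 0`. -/
theorem no_acip_liminf_zero
    (f : ℝ → ℝ) (hf : Measurable f) (hmaps : Set.MapsTo f (Set.Icc 0 1) (Set.Icc 0 1))
    (A : ℕ → Set ℝ) (hA : ∀ k, MeasurableSet (A k)) (hAsub : ∀ k, A k ⊆ Set.Icc 0 1)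
    (n : ℕ → ℕ) (hn : Filter.Tendsto n Filter.atTop Filter.atTop)
    (hsmall : Filter.Tendsto (fun k => (volume.restrict (Set.Icc (0:ℝ) 1)) (A k))
      Filter.atTop (nhds 0))
    (hbig : ∀ k, 1 ≤ k →
      (1 : ENNReal) - (2 ^ (k + 1))⁻¹ ≤
        (volume.restrict (Set.Icc (0:ℝ) 1)) (f^[n k] ⁻¹' (A k))) :
    (1 : ENNReal)/2 ≤
      (volume.restrict (Set.Icc (0:ℝ) 1)) (⋂ k, ⋂ (_ : 1 ≤ k), f^[n k] ⁻¹' (A k)) ∧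
    Filter.atTop.liminf (fun m : ℕ =>
      (volume.restrict (Set.Icc (0:ℝ) 1))
        (f^[m] '' (⋂ k, ⋂ (_ : 1 ≤ k), f^[n k] ⁻¹' (A k)))) = 0 := by
  set μ := volume.restrict (Set.Icc (0:ℝ) 1) with hμ
  have hμuniv : μ Set.univ = 1 := by
    rw [hμ, Measure.restrict_apply_univ, Real.volume_Icc]
    norm_num
  have hfin : ∀ s : Set ℝ, μ s ≠ ⊤ := by
    intro s
    have : μ s ≤ μ Set.univ := measure_mono (Set.subset_univ s)
    rw [hμuniv] at this
    exact (lt_of_le_of_lt this (by norm_num)).ne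
  set B : ℕ → Set ℝ := fun k => f^[n k] ⁻¹' (A k) with hB
  have hBmeas : ∀ k, MeasurableSet (B k) := fun k => (hf.iterate (n k)) (hA k)
  set S : Set ℝ := ⋂ k, ⋂ (_ : 1 ≤ k), B k with hS
  have hSmeas : MeasurableSet S :=
    MeasurableSet.iInter fun k => MeasurableSet.iInter fun _ => hBmeas k
  have hcompl : ∀ k, 1 ≤ k → μ (B k)ᶜ ≤ (2 ^ (k + 1))⁻¹ := by
    intro k hk
    have h1 : μ (B k)ᶜ = μ Set.univ - μ (B k) := measure_compl (hBmeas k) (hfin _)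
    rw [h1, hμuniv]
    calc (1:ENNReal) - μ (B k) ≤ 1 - (1 - (2 ^ (k + 1))⁻¹) :=
          tsub_le_tsub le_rfl (hbig k hk)
      _ = (2 ^ (k + 1))⁻¹ := by
          rw [ENNReal.sub_sub_cancel (by norm_num) (ENNReal.inv_le_one.mpr
            (one_le_two.trans (le_self_pow₀ one_le_two (Nat.succ_ne_zero k))))]
  have hScompl : μ Sᶜ ≤ 1/2 := by
    have hSc : Sᶜ = ⋃ k, ⋃ (_ : 1 ≤ k), (B k)ᶜ := by
      rw [hS]; simp [Set.compl_iInter]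
    rw [hSc]
    have hle : μ (⋃ k, ⋃ (_ : 1 ≤ k), (B k)ᶜ) ≤
        ∑' k, μ (⋃ (_ : 1 ≤ k), (B k)ᶜ) := measure_iUnion_le _
    refine hle.trans ?_
    have hterm : ∀ k, μ (⋃ (_ : 1 ≤ k), (B k)ᶜ) ≤
        (if 1 ≤ k then ((2:ENNReal) ^ (k + 1))⁻¹ else 0) := by
      intro k
      by_cases hk : 1 ≤ k
      · simp only [hk, Set.iUnion_true, if_pos hk]
        exact hcompl k hk
      · simp [hk]
    exact (ENNReal.tsum_le_tsum hterm).trans aux_tsum_half.le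
  constructor
  · have hadd : μ S + μ Sᶜ = 1 := by
      rw [measure_add_measure_compl hSmeas, hμuniv]
    have h1 : (1:ENNReal) - μ Sᶜ ≤ μ S := by
      rw [tsub_le_iff_right, hadd]
    refine le_trans ?_ h1
    calc (1:ENNReal)/2 = 1 - 1/2 := by
          rw [one_div, ENNReal.one_sub_inv_two]
      _ ≤ 1 - μ Sᶜ := tsub_le_tsub le_rfl hScompl
  · set g : ℕ → ENNReal := fun m => μ (f^[m] '' S) with hg
    have himg : ∀ k, 1 ≤ k → f^[n k] '' S ⊆ A k := by
      intro k hk x hx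
      obtain ⟨y, hy, rfl⟩ := hx
      have : y ∈ B k := by
        rw [hS] at hy
        exact Set.mem_iInter.mp (Set.mem_iInter.mp hy k) hk
      exact this
    have hgn : Tendsto (g ∘ n) atTop (nhds 0) := by
      have hub : ∀ᶠ k in atTop, (g ∘ n) k ≤ μ (A k) := by
        filter_upwards [eventually_ge_atTop 1] with k hk
        exact measure_mono (himg k hk)
      have hlb : ∀ᶠ k in atTop, (0:ENNReal) ≤ (g ∘ n) k := by
        filter_upwards with k; exact zero_le
      exact tendsto_of_tendsto_of_tendsto_of_le_of_le' tendsto_const_nhds hsmall hlb hub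
    have h1 : atTop.liminf g ≤ (map n atTop).liminf g :=
      liminf_le_liminf_of_le hn
    have h2 : (map n atTop).liminf g = atTop.liminf (g ∘ n) := by
      rw [Filter.liminf_eq, Filter.liminf_eq]
      congr 1
    have h3 : atTop.liminf (g ∘ n) = 0 := hgn.liminf_eq
    exact le_antisymm (h1.trans (h2.le.trans h3.le)) zero_le
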